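/- Let μ ∈ ℝ, 0 < β₊ < 1, 0 < β₋ < 1, α₊ ≥ 0, α₋ ≥ 0, λ₊ > 0, λ₋ > 0, and define the Lévy density v : ℝ → ℝ by v(x) = α₊·e^{−λ₊x}·x^{−1−β₊} for x > 0, v(x) = α₋·e^{−λ₋|x|}·|x|^{−1−β₋} for x < 0, and v(0) = 0. Then for every real ξ the function x ↦ (e^{ixξ} − 1)·v(x) is integrable on ℝ, and iμξ + ∫_ℝ (e^{ixξ} − 1)·v(x) dx = Ψ(ξ), where Ψ is the GTS characteristic exponent Ψ(ξ) = iμξ + α₊·Γ(−β₊)·((λ₊ − iξ)^{β₊} − λ₊^{β₊}) + α₋·Γ(−β₋)·((λ₋ + iξ)^{β₋} − λ₋^{β₋}). -/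

import Mathlib

open MeasureTheory Set

namespace GTSaux
open Filter Complex Topology

lemma norm_cexp_sub_one_le {w : ℂ} (hw : w.re ≤ 0) : ‖Complex.exp w - 1‖ ≤ ‖w‖ := by
  have hderiv : ∀ s ∈ uIcc (0:ℝ) 1,
      HasDerivAt (fun s : ℝ => Complex.exp (s * w)) (w * Complex.exp (s * w)) s := by
    intro s _
    have h1 : HasDerivAt (fun z : ℂ => Complex.exp (z * w)) (w * Complex.exp ((s:ℂ) * w)) s := by
      simpa [mul_comm] using ((hasDerivAt_id ((s:ℂ))).mul_const w).cexp
    simpa using h1.comp_ofReal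
  have hint : IntervalIntegrable (fun s : ℝ => w * Complex.exp (s * w)) volume 0 1 := by
    apply Continuous.intervalIntegrable
    exact continuous_const.mul ((Complex.continuous_ofReal.mul continuous_const).cexp)
  have key : ∫ s in (0:ℝ)..1, w * Complex.exp (s * w) = Complex.exp w - 1 := by
    simpa using intervalIntegral.integral_eq_sub_of_hasDerivAt hderiv hint
  rw [← key]
  have := intervalIntegral.norm_integral_le_of_norm_le_const
    (C := ‖w‖) (f := fun s : ℝ => w * Complex.exp (s * w)) (a := 0) (b := 1) ?_
  · simpa using this
  · intro s hs
    rw [uIoc_of_le (by norm_num : (0:ℝ) ≤ 1)] at hs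
    have hs0 : 0 ≤ s := hs.1.le
    rw [norm_mul]
    have h1 : ‖Complex.exp (s * w)‖ ≤ 1 := by
      rw [Complex.norm_exp]
      rw [Real.exp_le_one_iff]
      have : ((s:ℂ) * w).re = s * w.re := by simp
      rw [this]
      exact mul_nonpos_of_nonneg_of_nonpos hs0 hw
    calc ‖w‖ * ‖Complex.exp (s * w)‖ ≤ ‖w‖ * 1 := by
          exact mul_le_mul_of_nonneg_left h1 (norm_nonneg w)
      _ = ‖w‖ := mul_one _


lemma contOn_kernel (β : ℝ) (z : ℂ) :
    ContinuousOn (fun t : ℝ => (Complex.exp (-(z * t)) - 1) * ((t ^ (-1 - β) : ℝ) : ℂ)) (Ioi 0) := by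
  apply ContinuousOn.mul
  · apply Continuous.continuousOn
    exact ((continuous_const.mul Complex.continuous_ofReal).neg.cexp).sub continuous_const
  · apply Complex.continuous_ofReal.comp_continuousOn
    intro t ht
    exact (Real.continuousAt_rpow_const t _ (Or.inl (ne_of_gt ht))).continuousWithinAt

lemma norm_kernel_le {β : ℝ} {z : ℂ} (hz : 0 ≤ z.re) {t : ℝ} (ht : 0 < t) :
    ‖(Complex.exp (-(z * t)) - 1) * ((t ^ (-1 - β) : ℝ) : ℂ)‖
      ≤ min (‖z‖ * t) 2 * t ^ (-1 - β) := by
  rw [norm_mul, Complex.norm_real, Real.norm_eq_abs,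
    _root_.abs_of_nonneg (Real.rpow_nonneg ht.le _)]
  apply mul_le_mul_of_nonneg_right _ (Real.rpow_nonneg ht.le _)
  have hre : (-(z * t)).re ≤ 0 := by
    simp only [neg_re, mul_re, Complex.ofReal_re, Complex.ofReal_im, mul_zero, sub_zero]
    exact neg_nonpos.mpr (mul_nonneg hz ht.le)
  apply le_min
  · have := norm_cexp_sub_one_le hre
    calc ‖Complex.exp (-(z * t)) - 1‖ ≤ ‖-(z * (t:ℂ))‖ := this
      _ = ‖z‖ * t := by
        rw [norm_neg, norm_mul, Complex.norm_real, Real.norm_eq_abs, abs_of_pos ht]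
  · calc ‖Complex.exp (-(z * t)) - 1‖ ≤ ‖Complex.exp (-(z * t))‖ + 1 := by
          simpa using norm_sub_le (Complex.exp (-(z * t))) 1
      _ ≤ 1 + 1 := by
          gcongr
          rw [Complex.norm_exp]
          exact Real.exp_le_one_iff.mpr hre
      _ = 2 := by norm_num

lemma integrableOn_kernel {β : ℝ} (hβ0 : 0 < β) (hβ1 : β < 1) {z : ℂ} (hz : 0 ≤ z.re) :
    IntegrableOn (fun t : ℝ => (Complex.exp (-(z * t)) - 1) * ((t ^ (-1 - β) : ℝ) : ℂ)) (Ioi 0) := by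
  rw [← Ioc_union_Ioi_eq_Ioi (zero_le_one (α := ℝ))]
  apply IntegrableOn.union
  · -- on Ioc 0 1
    have hbound : IntegrableOn (fun t : ℝ => ‖z‖ * t ^ (-β)) (Ioc (0:ℝ) 1) := by
      apply Integrable.const_mul
      exact (intervalIntegrable_iff_integrableOn_Ioc_of_le zero_le_one).mp
        (intervalIntegral.intervalIntegrable_rpow' (by linarith))
    apply Integrable.mono' hbound
    · exact ((contOn_kernel β z).mono Ioc_subset_Ioi_self).aestronglyMeasurable measurableSet_Ioc
    · filter_upwards [ae_restrict_mem measurableSet_Ioc] with t ht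
      calc ‖(Complex.exp (-(z * t)) - 1) * ((t ^ (-1 - β) : ℝ) : ℂ)‖
          ≤ min (‖z‖ * t) 2 * t ^ (-1 - β) := norm_kernel_le hz ht.1
        _ ≤ (‖z‖ * t) * t ^ (-1 - β) := by
            apply mul_le_mul_of_nonneg_right (min_le_left _ _) (Real.rpow_nonneg ht.1.le _)
        _ = ‖z‖ * (t * t ^ (-1 - β)) := by ring
        _ = ‖z‖ * t ^ (-β) := by
            rw [show t * t ^ (-1 - β) = t ^ (-β) by
              rw [show -β = 1 + (-1 - β) by ring, Real.rpow_add ht.1, Real.rpow_one]]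
  · -- on Ioi 1
    have hbound : IntegrableOn (fun t : ℝ => 2 * t ^ (-1 - β)) (Ioi (1:ℝ)) := by
      apply Integrable.const_mul
      exact integrableOn_Ioi_rpow_of_lt (by linarith) one_pos
    apply Integrable.mono' hbound
    · exact ((contOn_kernel β z).mono (Ioi_subset_Ioi zero_le_one)).aestronglyMeasurable
        measurableSet_Ioi
    · filter_upwards [ae_restrict_mem measurableSet_Ioi] with t ht
      have ht0 : (0:ℝ) < t := lt_trans one_pos ht
      calc ‖(Complex.exp (-(z * t)) - 1) * ((t ^ (-1 - β) : ℝ) : ℂ)‖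
          ≤ min (‖z‖ * t) 2 * t ^ (-1 - β) := norm_kernel_le hz ht0
        _ ≤ 2 * t ^ (-1 - β) := by
            apply mul_le_mul_of_nonneg_right (min_le_right _ _) (Real.rpow_nonneg ht0.le _)

lemma integrableOn_rpow_exp {β : ℝ} (hβ1 : β < 1) {c : ℝ} (hc : 0 < c) :
    IntegrableOn (fun t : ℝ => t ^ (-β) * Real.exp (-(c * t))) (Ioi 0) := by
  have h0 : IntegrableOn (fun x : ℝ => Real.exp (-x) * x ^ (-β)) (Ioi 0) := by
    have := Real.GammaIntegral_convergent (show 0 < 1 - β by linarith)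
    simpa using this
  have h1 : IntegrableOn (fun t : ℝ => Real.exp (-(c * t)) * (c * t) ^ (-β)) (Ioi 0) := by
    have := (integrableOn_Ioi_comp_mul_left_iff
      (fun x : ℝ => Real.exp (-x) * x ^ (-β)) 0 hc).mpr
    simpa using this (by simpa using h0)
  apply IntegrableOn.congr_fun (h1.const_mul (c ^ β)) _ measurableSet_Ioi
  intro t ht
  have hcc : c ^ β * c ^ (-β) = 1 := by rw [← Real.rpow_add hc]; simp
  calc c ^ β * (Real.exp (-(c * t)) * (c * t) ^ (-β))
      = c ^ β * (Real.exp (-(c * t)) * (c ^ (-β) * t ^ (-β))) := by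
        rw [Real.mul_rpow hc.le (le_of_lt ht)]
    _ = (c ^ β * c ^ (-β)) * (t ^ (-β) * Real.exp (-(c * t))) := by ring
    _ = t ^ (-β) * Real.exp (-(c * t)) := by rw [hcc, one_mul]

noncomputable def hfun (β r : ℝ) : ℝ :=
  ∫ t in Ioi (0:ℝ), (Real.exp (-(r * t)) - 1) * t ^ (-1 - β)

lemma contOn_real_kernel (β r : ℝ) :
    ContinuousOn (fun t : ℝ => (Real.exp (-(r * t)) - 1) * t ^ (-1 - β)) (Ioi 0) := by
  apply ContinuousOn.mul
  · exact (((continuous_const.mul continuous_id).neg.rexp).sub continuous_const).continuousOn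
  · intro t ht
    exact (Real.continuousAt_rpow_const t _ (Or.inl (ne_of_gt ht))).continuousWithinAt

lemma real_kernel_integrable {β : ℝ} (hβ0 : 0 < β) (hβ1 : β < 1) {r : ℝ} (hr : 0 ≤ r) :
    IntegrableOn (fun t : ℝ => (Real.exp (-(r * t)) - 1) * t ^ (-1 - β)) (Ioi 0) := by
  have hz : (0:ℝ) ≤ ((r:ℂ)).re := by simpa using hr
  have h := (integrableOn_kernel hβ0 hβ1 hz).re
  apply IntegrableOn.congr_fun h _ measurableSet_Ioi
  intro t ht
  show ((Complex.exp (-((r:ℂ) * t)) - 1) * ((t ^ (-1 - β) : ℝ) : ℂ)).re = _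
  rw [show -((r:ℂ) * t) = ((-(r * t) : ℝ) : ℂ) by push_cast; ring, ← Complex.ofReal_exp]
  norm_cast

lemma hfun_smul {β : ℝ} (hβ0 : 0 < β) (hβ1 : β < 1) {r : ℝ} (hr : 0 < r) :
    hfun β r = r ^ β * hfun β 1 := by
  have key := integral_comp_mul_left_Ioi
    (fun s : ℝ => (Real.exp (-s) - 1) * s ^ (-1 - β)) 0 hr
  simp only [mul_zero, smul_eq_mul] at key
  have h1 : hfun β r = r ^ (1 + β) * ∫ t in Ioi (0:ℝ),
      (Real.exp (-(r * t)) - 1) * (r * t) ^ (-1 - β) := by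
    rw [← integral_const_mul]
    apply setIntegral_congr_fun measurableSet_Ioi
    intro t ht
    have h2 : (r * t) ^ (-1 - β) = r ^ (-1 - β) * t ^ (-1 - β) :=
      Real.mul_rpow hr.le (le_of_lt ht)
    show (Real.exp (-(r * t)) - 1) * t ^ (-1 - β)
        = r ^ (1 + β) * ((Real.exp (-(r * t)) - 1) * (r * t) ^ (-1 - β))
    rw [h2]
    have h3 : r ^ (1 + β) * r ^ (-1 - β) = 1 := by
      rw [← Real.rpow_add hr]; norm_num
    calc (Real.exp (-(r * t)) - 1) * t ^ (-1 - β)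
        = (r ^ (1 + β) * r ^ (-1 - β)) * ((Real.exp (-(r * t)) - 1) * t ^ (-1 - β)) := by
          rw [h3, one_mul]
      _ = r ^ (1 + β) * ((Real.exp (-(r * t)) - 1) * (r ^ (-1 - β) * t ^ (-1 - β))) := by ring
  rw [h1, key]
  have : hfun β 1 = ∫ s in Ioi (0:ℝ), (Real.exp (-s) - 1) * s ^ (-1 - β) := by
    unfold hfun; simp
  rw [← this]
  rw [show r ^ (1 + β) = r * r ^ β by rw [Real.rpow_add hr, Real.rpow_one]]
  field_simp


lemma hasDerivAt_hfun {β : ℝ} (hβ0 : 0 < β) (hβ1 : β < 1) :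
    HasDerivAt (hfun β) (-Real.Gamma (1 - β)) 1 := by
  have main := hasDerivAt_integral_of_dominated_loc_of_deriv_le
    (μ := volume.restrict (Ioi (0:ℝ))) (x₀ := (1:ℝ))
    (F := fun r t => (Real.exp (-(r * t)) - 1) * t ^ (-1 - β))
    (F' := fun r t => -(Real.exp (-(r * t)) * t ^ (-β)))
    (bound := fun t => t ^ (-β) * Real.exp (-(2⁻¹ * t)))
    (s := Metric.ball 1 2⁻¹) (Metric.ball_mem_nhds _ (by norm_num))
    (Eventually.of_forall fun r =>
      ((contOn_real_kernel β r).aestronglyMeasurable measurableSet_Ioi))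
    (real_kernel_integrable hβ0 hβ1 zero_le_one)
    ?meas' ?bound ?boundint ?diff
  case meas' =>
    apply ContinuousOn.aestronglyMeasurable _ measurableSet_Ioi
    apply ContinuousOn.neg
    apply ContinuousOn.mul
    · exact ((continuous_const.mul continuous_id).neg.rexp).continuousOn
    · intro t ht
      exact (Real.continuousAt_rpow_const t _ (Or.inl (ne_of_gt ht))).continuousWithinAt
  case bound =>
    filter_upwards [ae_restrict_mem measurableSet_Ioi] with t ht r hrb
    have ht0 : (0:ℝ) < t := ht
    have hr2 : (2⁻¹:ℝ) ≤ r := by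
      have := abs_lt.mp (by simpa [Real.dist_eq] using hrb)
      linarith [this.1]
    rw [norm_neg, norm_mul, Real.norm_eq_abs, Real.norm_eq_abs, Real.abs_exp,
      _root_.abs_of_nonneg (Real.rpow_nonneg ht0.le _)]
    rw [mul_comm]
    apply mul_le_mul_of_nonneg_left _ (Real.rpow_nonneg ht0.le _)
    apply Real.exp_le_exp.mpr
    nlinarith
  case boundint => exact integrableOn_rpow_exp hβ1 (by norm_num)
  case diff =>
    filter_upwards [ae_restrict_mem measurableSet_Ioi] with t ht r _
    have ht0 : (0:ℝ) < t := ht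
    have h1 : HasDerivAt (fun r : ℝ => -(r * t)) (-t) r := by
      exact (hasDerivAt_mul_const t (x := r)).neg
    have h2 : HasDerivAt (fun r : ℝ => (Real.exp (-(r * t)) - 1) * t ^ (-1 - β))
        ((Real.exp (-(r * t)) * (-t)) * t ^ (-1 - β)) r :=
      ((h1.exp.sub_const 1).mul_const _)
    convert h2 using 1
    · rfl
    · rfl
    have h3 : t * t ^ (-1 - β) = t ^ (-β) := by
      rw [show -β = 1 + (-1 - β) by ring, Real.rpow_add ht0, Real.rpow_one]
    rw [← h3]; ring
  have h4 : (∫ t in Ioi (0:ℝ), -(Real.exp (-(1 * t)) * t ^ (-β))) = -Real.Gamma (1 - β) := by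
    rw [integral_neg]
    congr 1
    rw [Real.Gamma_eq_integral (show (0:ℝ) < 1 - β by linarith)]
    apply setIntegral_congr_fun measurableSet_Ioi
    intro t ht
    rw [show (1:ℝ) - β - 1 = -β by ring]
    simp
  rw [← h4]
  exact main.2

lemma hfun_one {β : ℝ} (hβ0 : 0 < β) (hβ1 : β < 1) : hfun β 1 = Real.Gamma (-β) := by
  have h1 : HasDerivAt (fun r : ℝ => r ^ β * hfun β 1) (β * hfun β 1) 1 := by
    have := (Real.hasDerivAt_rpow_const (p := β) (x := (1:ℝ))
      (Or.inl one_ne_zero)).mul_const (hfun β 1)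
    simpa using this
  have h2 : HasDerivAt (hfun β) (β * hfun β 1) 1 := by
    apply h1.congr_of_eventuallyEq
    filter_upwards [eventually_gt_nhds (show (0:ℝ) < 1 by norm_num)] with r hr
    exact hfun_smul hβ0 hβ1 hr
  have h3 := h2.unique (hasDerivAt_hfun hβ0 hβ1)
  have hΓ : Real.Gamma (1 - β) = -β * Real.Gamma (-β) := by
    have := Real.Gamma_add_one (neg_ne_zero.mpr hβ0.ne')
    rwa [show -β + 1 = 1 - β by ring] at this
  rw [hΓ] at h3
  have h4 : β * hfun β 1 = β * Real.Gamma (-β) := by linarith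
  exact mul_left_cancel₀ hβ0.ne' h4

lemma hfun_eq {β : ℝ} (hβ0 : 0 < β) (hβ1 : β < 1) {r : ℝ} (hr : 0 < r) :
    hfun β r = Real.Gamma (-β) * r ^ β := by
  rw [hfun_smul hβ0 hβ1 hr, hfun_one hβ0 hβ1]; ring

lemma hfun_eq' {β : ℝ} (hβ0 : 0 < β) (hβ1 : β < 1) {r : ℝ} (hr : 0 < r) :
    (∫ t in Ioi (0:ℝ), (Real.exp (-(r * t)) - 1) * t ^ (-1 - β)) = Real.Gamma (-β) * r ^ β :=
  hfun_eq hβ0 hβ1 hr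


noncomputable def Hfun (β : ℝ) (z : ℂ) : ℂ :=
  ∫ t in Ioi (0:ℝ), (Complex.exp (-(z * t)) - 1) * ((t ^ (-1 - β) : ℝ) : ℂ)

lemma Hfun_real {β : ℝ} (hβ0 : 0 < β) (hβ1 : β < 1) {r : ℝ} (hr : 0 < r) :
    Hfun β r = ((Real.Gamma (-β) * r ^ β : ℝ) : ℂ) := by
  rw [← hfun_eq' hβ0 hβ1 hr]
  unfold Hfun
  have hoc : ∫ t in Ioi (0:ℝ), (((Real.exp (-(r * t)) - 1) * t ^ (-1 - β) : ℝ) : ℂ)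
      = (((∫ t in Ioi (0:ℝ), (Real.exp (-(r * t)) - 1) * t ^ (-1 - β)) : ℝ) : ℂ) :=
    integral_ofReal (f := fun t : ℝ => (Real.exp (-(r * t)) - 1) * t ^ (-1 - β))
      (μ := volume.restrict (Ioi 0)) (𝕜 := ℂ)
  rw [← hoc]
  apply setIntegral_congr_fun measurableSet_Ioi
  intro t ht
  show (Complex.exp (-((r:ℂ) * t)) - 1) * ((t ^ (-1 - β) : ℝ) : ℂ)
      = (((Real.exp (-(r * t)) - 1) * t ^ (-1 - β) : ℝ) : ℂ)
  rw [show -((r:ℂ) * t) = ((-(r * t) : ℝ) : ℂ) by push_cast; ring, ← Complex.ofReal_exp]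
  norm_cast

lemma Hfun_differentiableAt {β : ℝ} (hβ0 : 0 < β) (hβ1 : β < 1) {z₀ : ℂ} (hz : 0 < z₀.re) :
    DifferentiableAt ℂ (Hfun β) z₀ := by
  set ε : ℝ := z₀.re / 2 with hε
  have hε0 : 0 < ε := by positivity
  have main := hasDerivAt_integral_of_dominated_loc_of_deriv_le
    (μ := volume.restrict (Ioi (0:ℝ))) (x₀ := z₀)
    (F := fun (z : ℂ) (t : ℝ) => (Complex.exp (-(z * t)) - 1) * ((t ^ (-1 - β) : ℝ) : ℂ))
    (F' := fun (z : ℂ) (t : ℝ) => (Complex.exp (-(z * t)) * (-(t:ℂ))) * ((t ^ (-1 - β) : ℝ) : ℂ))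
    (bound := fun t => t ^ (-β) * Real.exp (-(ε * t)))
    (s := Metric.ball z₀ ε) (Metric.ball_mem_nhds _ hε0)
    (Eventually.of_forall fun z =>
      ((contOn_kernel β z).aestronglyMeasurable measurableSet_Ioi))
    (integrableOn_kernel hβ0 hβ1 hz.le)
    ?meas' ?bound ?boundint ?diff
  case meas' =>
    apply ContinuousOn.aestronglyMeasurable _ measurableSet_Ioi
    apply ContinuousOn.mul
    · apply Continuous.continuousOn
      exact ((continuous_const.mul Complex.continuous_ofReal).neg.cexp).mul
        (Complex.continuous_ofReal.neg)
    · apply Complex.continuous_ofReal.comp_continuousOn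
      intro t ht
      exact (Real.continuousAt_rpow_const t _ (Or.inl (ne_of_gt ht))).continuousWithinAt
  case bound =>
    filter_upwards [ae_restrict_mem measurableSet_Ioi] with t ht z hzb
    have ht0 : (0:ℝ) < t := ht
    have hzre : ε ≤ z.re := by
      have h1 : |z.re - z₀.re| ≤ ‖z - z₀‖ := by
        simpa using Complex.abs_re_le_norm (z - z₀)
      have h2 : ‖z - z₀‖ < ε := by simpa [Metric.mem_ball, dist_eq_norm] using hzb
      have := abs_lt.mp (lt_of_le_of_lt h1 h2)
      rw [hε] at *
      linarith [this.1]
    rw [norm_mul, norm_mul, norm_neg, Complex.norm_real, Complex.norm_real]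
    rw [Complex.norm_exp]
    rw [Real.norm_eq_abs, Real.norm_eq_abs, _root_.abs_of_pos ht0,
      _root_.abs_of_nonneg (Real.rpow_nonneg ht0.le _)]
    have hre : (-(z * t)).re = -(z.re * t) := by
      simp [Complex.mul_re]
    rw [hre]
    calc Real.exp (-(z.re * t)) * t * t ^ (-1 - β)
        = t ^ (-β) * Real.exp (-(z.re * t)) := by
          rw [mul_assoc, show t * t ^ (-1 - β) = t ^ (-β) by
            rw [show -β = 1 + (-1 - β) by ring, Real.rpow_add ht0, Real.rpow_one]]
          ring
      _ ≤ t ^ (-β) * Real.exp (-(ε * t)) := by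
          apply mul_le_mul_of_nonneg_left _ (Real.rpow_nonneg ht0.le _)
          apply Real.exp_le_exp.mpr
          nlinarith
  case boundint => exact integrableOn_rpow_exp hβ1 hε0
  case diff =>
    filter_upwards [ae_restrict_mem measurableSet_Ioi] with t ht z _
    have h1 : HasDerivAt (fun z : ℂ => -(z * (t:ℂ))) (-(t:ℂ)) z := by
      exact (hasDerivAt_mul_const (t:ℂ) (x := z)).neg
    exact (h1.cexp.sub_const 1).mul_const _
  exact main.2.differentiableAt

lemma Hfun_eq {β : ℝ} (hβ0 : 0 < β) (hβ1 : β < 1) {z : ℂ} (hz : 0 < z.re) :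
    Hfun β z = (Real.Gamma (-β) : ℂ) * z ^ (β : ℂ) := by
  set U : Set ℂ := {w : ℂ | 0 < w.re} with hU
  have hopen : IsOpen U := isOpen_lt continuous_const Complex.continuous_re
  have hH : AnalyticOnNhd ℂ (Hfun β) U := by
    apply DifferentiableOn.analyticOnNhd _ hopen
    intro w hw
    exact (Hfun_differentiableAt hβ0 hβ1 hw).differentiableWithinAt
  have hG : AnalyticOnNhd ℂ (fun w : ℂ => (Real.Gamma (-β) : ℂ) * w ^ (β : ℂ)) U := by
    apply DifferentiableOn.analyticOnNhd _ hopen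
    intro w hw
    apply DifferentiableAt.differentiableWithinAt
    exact (((hasDerivAt_id w).cpow_const (Or.inl hw)).const_mul _).differentiableAt
  have hconn : IsPreconnected U := (convex_halfSpace_re_gt 0).isPreconnected
  have h1U : (1:ℂ) ∈ U := by simp [hU]
  have hzU : z ∈ U := hz
  have hfreq : ∃ᶠ w in 𝓝[≠] (1:ℂ), Hfun β w = (Real.Gamma (-β) : ℂ) * w ^ (β : ℂ) := by
    have htend : Tendsto (fun n : ℕ => ((1 + ((n:ℝ)+1)⁻¹ : ℝ) : ℂ)) atTop (𝓝[≠] (1:ℂ)) := by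
      apply tendsto_nhdsWithin_of_tendsto_nhds_of_eventually_within
      · have : Tendsto (fun n : ℕ => (1 + ((n:ℝ)+1)⁻¹ : ℝ)) atTop (𝓝 1) := by
          have h0 : Tendsto (fun n : ℕ => ((n:ℝ)+1)⁻¹) atTop (𝓝 0) :=
            tendsto_one_div_add_atTop_nhds_zero_nat.congr (by intro n; rw [one_div])
          simpa using tendsto_const_nhds.add h0
        have h2 := (Complex.continuous_ofReal.tendsto 1).comp this
        simpa [Function.comp_def] using h2
      · apply Eventually.of_forall
        intro n
        simp only [mem_compl_iff, mem_singleton_iff]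
        intro hcon
        have : (1 + ((n:ℝ)+1)⁻¹ : ℝ) = 1 := by exact_mod_cast hcon
        have hpos : (0:ℝ) < ((n:ℝ)+1)⁻¹ := by positivity
        linarith
    apply htend.frequently
    apply Frequently.of_forall
    intro n
    have hrpos : (0:ℝ) < 1 + ((n:ℝ)+1)⁻¹ := by positivity
    rw [Hfun_real hβ0 hβ1 hrpos]
    push_cast [Complex.ofReal_cpow hrpos.le]
    ring
  exact hH.eqOn_of_preconnected_of_frequently_eq hG hconn h1U hfreq hzU

lemma Hfun_eq2 {β : ℝ} (hβ0 : 0 < β) (hβ1 : β < 1) {z : ℂ} (hz : 0 < z.re) :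
    (∫ t in Ioi (0:ℝ), (Complex.exp (-(z * t)) - 1) * ((t ^ (-1 - β) : ℝ) : ℂ))
      = (Real.Gamma (-β) : ℂ) * z ^ (β : ℂ) :=
  Hfun_eq hβ0 hβ1 hz


lemma key {β : ℝ} (hβ0 : 0 < β) (hβ1 : β < 1) {l : ℝ} (hl : 0 < l) (ξ : ℝ) :
    IntegrableOn (fun t : ℝ => (Complex.exp (Complex.I * t * ξ) - 1)
        * ((Real.exp (-(l * t)) * t ^ (-1 - β) : ℝ) : ℂ)) (Ioi 0) ∧
      (∫ t in Ioi (0:ℝ), (Complex.exp (Complex.I * t * ξ) - 1)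
          * ((Real.exp (-(l * t)) * t ^ (-1 - β) : ℝ) : ℂ))
        = (Real.Gamma (-β) : ℂ) * (((l:ℂ) - Complex.I * ξ) ^ (β : ℂ) - (l:ℂ) ^ (β : ℂ)) := by
  set z : ℂ := (l:ℂ) - Complex.I * ξ with hzdef
  have hz : 0 < z.re := by simp [hzdef, hl]
  have hl' : (0:ℝ) < ((l:ℂ)).re := by simpa using hl
  have hpt : ∀ t ∈ Ioi (0:ℝ),
      ((Complex.exp (-(z * t)) - 1) * ((t ^ (-1 - β) : ℝ) : ℂ)
        - (Complex.exp (-((l:ℂ) * t)) - 1) * ((t ^ (-1 - β) : ℝ) : ℂ))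
      = (Complex.exp (Complex.I * t * ξ) - 1)
        * ((Real.exp (-(l * t)) * t ^ (-1 - β) : ℝ) : ℂ) := by
    intro t _
    have hexp : Complex.exp (Complex.I * t * ξ) * Complex.exp (-((l:ℂ) * t))
        = Complex.exp (-(z * t)) := by
      rw [← Complex.exp_add]
      congr 1
      rw [hzdef]; ring
    have hre : Complex.exp (-((l:ℂ) * t)) = ((Real.exp (-(l * t)) : ℝ) : ℂ) := by
      rw [show -((l:ℂ) * t) = ((-(l * t) : ℝ) : ℂ) by push_cast; ring, ← Complex.ofReal_exp]
    rw [Complex.ofReal_mul, ← hre]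
    linear_combination (-((t ^ (-1 - β) : ℝ) : ℂ)) * hexp
  have hint1 := integrableOn_kernel (β := β) hβ0 hβ1 hz.le
  have hint2 := integrableOn_kernel (β := β) hβ0 hβ1 hl'.le
  constructor
  · exact IntegrableOn.congr_fun (hint1.sub hint2) hpt measurableSet_Ioi
  · rw [← setIntegral_congr_fun measurableSet_Ioi hpt, integral_sub hint1 hint2,
      Hfun_eq2 hβ0 hβ1 hz, Hfun_eq2 hβ0 hβ1 hl']
    ring

end GTSaux

open GTSaux

/-- The Lévy–Khintchine representation of the GTS characteristic exponent:
for the GTS Lévy density `v`, the function `x ↦ (e^{ixξ} − 1)·v(x)` is integrable on `ℝ` and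
`iμξ + ∫ (e^{ixξ} − 1)·v(x) dx = Ψ(ξ)`. -/
theorem gts_levy_khintchine (μ βp βm αp αm lp lm : ℝ)
    (hβp0 : 0 < βp) (hβp1 : βp < 1) (hβm0 : 0 < βm) (hβm1 : βm < 1)
    (hαp : 0 ≤ αp) (hαm : 0 ≤ αm) (hlp : 0 < lp) (hlm : 0 < lm)
    (v : ℝ → ℝ)
    (hv_pos : ∀ x : ℝ, 0 < x → v x = αp * Real.exp (-lp * x) * x ^ (-1 - βp))
    (hv_neg : ∀ x : ℝ, x < 0 → v x = αm * Real.exp (-lm * |x|) * |x| ^ (-1 - βm))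
    (hv_zero : v 0 = 0)
    (Ψ : ℝ → ℂ)
    (hΨ : ∀ ξ : ℝ, Ψ ξ = Complex.I * μ * ξ
        + αp * Real.Gamma (-βp)
            * (((lp : ℂ) - Complex.I * ξ) ^ (βp : ℂ) - (lp : ℂ) ^ (βp : ℂ))
        + αm * Real.Gamma (-βm)
            * (((lm : ℂ) + Complex.I * ξ) ^ (βm : ℂ) - (lm : ℂ) ^ (βm : ℂ)))
    (ξ : ℝ) :
    Integrable (fun x : ℝ => (Complex.exp (Complex.I * x * ξ) - 1) * (v x : ℂ)) ∧
      Complex.I * μ * ξ + ∫ x : ℝ, (Complex.exp (Complex.I * x * ξ) - 1) * (v x : ℂ)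
        = Ψ ξ := by
  set f : ℝ → ℂ := fun x => (Complex.exp (Complex.I * x * ξ) - 1) * (v x : ℂ) with hf
  -- positive side
  obtain ⟨hip, hvp⟩ := key hβp0 hβp1 hlp ξ
  obtain ⟨him, hvm⟩ := key hβm0 hβm1 hlm (-ξ)
  have hpos_eq : ∀ x ∈ Ioi (0:ℝ),
      (αp : ℂ) * ((Complex.exp (Complex.I * x * ξ) - 1)
        * ((Real.exp (-(lp * x)) * x ^ (-1 - βp) : ℝ) : ℂ)) = f x := by
    intro x hx
    rw [hf]
    simp only
    rw [hv_pos x hx]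
    push_cast
    rw [neg_mul]
    ring
  have hIoi : IntegrableOn f (Ioi 0) :=
    IntegrableOn.congr_fun (hip.const_mul (αp : ℂ)) hpos_eq measurableSet_Ioi
  have hIoi_val : (∫ x in Ioi (0:ℝ), f x)
      = (αp : ℂ) * ((Real.Gamma (-βp) : ℂ)
          * (((lp:ℂ) - Complex.I * ξ) ^ (βp : ℂ) - (lp:ℂ) ^ (βp : ℂ))) := by
    rw [← setIntegral_congr_fun measurableSet_Ioi hpos_eq, integral_const_mul, hvp]
  -- negative side
  have hneg_eq : ∀ t ∈ Ioi (0:ℝ),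
      (αm : ℂ) * ((Complex.exp (Complex.I * t * ((-ξ : ℝ) : ℂ)) - 1)
        * ((Real.exp (-(lm * t)) * t ^ (-1 - βm) : ℝ) : ℂ)) = f (-t) := by
    intro t ht
    rw [hf]
    simp only
    rw [hv_neg (-t) (by simpa using ht), abs_neg, abs_of_pos ht]
    push_cast
    rw [neg_mul]
    ring
  have hIoi_neg : IntegrableOn (fun t => f (-t)) (Ioi 0) :=
    IntegrableOn.congr_fun (him.const_mul (αm : ℂ)) hneg_eq measurableSet_Ioi
  have hIci_neg : IntegrableOn (fun t => f (-t)) (Ici 0) :=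
    Iff.mpr integrableOn_Ici_iff_integrableOn_Ioi hIoi_neg
  have hIic : IntegrableOn f (Iic 0) := by
    have hpre : (Neg.neg : ℝ → ℝ) ⁻¹' (Iic 0) = Ici 0 := by ext x; simp
    refine (MeasurePreserving.integrableOn_comp_preimage
      (Measure.measurePreserving_neg (volume : Measure ℝ))
      (Homeomorph.neg ℝ).measurableEmbedding).mp ?_
    rw [hpre]
    exact hIci_neg
  have hIic_val : (∫ x in Iic (0:ℝ), f x)
      = (αm : ℂ) * ((Real.Gamma (-βm) : ℂ)
          * (((lm:ℂ) + Complex.I * ξ) ^ (βm : ℂ) - (lm:ℂ) ^ (βm : ℂ))) := by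
    have h1 : (∫ x in Ioi (0:ℝ), f (-x)) = ∫ x in Iic (0:ℝ), f x := by
      simpa using integral_comp_neg_Ioi (0:ℝ) f
    rw [← h1, ← setIntegral_congr_fun measurableSet_Ioi hneg_eq, integral_const_mul, hvm]
    congr 3
    push_cast
    ring
  -- combine
  have hInt : Integrable f := by
    rw [← integrableOn_univ, ← Set.Iic_union_Ioi (a := (0:ℝ))]
    exact hIic.union hIoi
  refine ⟨hInt, ?_⟩
  rw [← intervalIntegral.integral_Iic_add_Ioi hIic hIoi, hIic_val, hIoi_val, hΨ ξ]
  push_cast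
  ring
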